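/- Let k ≥ 1, let T₁, T₂ be finite subsets of ℤ^k, let a, b : ℤ^k → ℂ, and define F(θ) = ∑_{t ∈ T₁} a(t) · ∏_{j=1}^k exp(−i · t_j · θ_j / 2) and G(θ) = ∑_{t ∈ T₂} b(t) · ∏_{j=1}^k exp(−i · t_j · θ_j / 2) for θ ∈ ℝ^k. Suppose λ_1, …, λ_k are natural numbers with |t_j| ≤ λ_j for every t ∈ T₁ ∪ T₂ and every j, suppose F is not identically zero, and suppose there exist α ∈ ℝ^k and β ∈ ℝ such that G(θ) = exp(−i·(α_1·θ_1 + ⋯ + α_k·θ_k + β)/2) · F(θ) for all θ ∈ ℝ^k. Then for every j ∈ {1,…,k}, α_j is an integer and |α_j| ≤ 2·λ_j. -/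

import Mathlib

open Complex Real Polynomial

lemma aux_inf_root (r : Polynomial ℂ)
    (h : ∀ x : ℝ, r.eval (Complex.exp (-Complex.I * x / 2)) = 0) : r = 0 := by
  apply Polynomial.eq_zero_of_infinite_isRoot
  apply Set.infinite_of_injective_forall_mem
    (f := fun n : ℕ => Complex.exp (-Complex.I * ((1 / (n + 1) : ℝ) : ℂ) / 2))
  case hi =>
    intro n1 n2 hEq
    simp only at hEq
    rw [Complex.exp_eq_exp_iff_exists_int] at hEq
    obtain ⟨n, hn⟩ := hEq
    set x₁ : ℝ := 1 / (n1 + 1) with hx1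
    set x₂ : ℝ := 1 / (n2 + 1) with hx2
    have h2 : (x₁ : ℂ) = (x₂ : ℂ) - 4 * π * n := by
      linear_combination (2 * Complex.I) * hn + (x₁ - x₂ + 4 * π * n) * Complex.I_sq
    have h3 : x₁ = x₂ - 4 * π * n := by exact_mod_cast h2
    have hp1 : (0:ℝ) < (n1:ℝ) + 1 := by positivity
    have hp2 : (0:ℝ) < (n2:ℝ) + 1 := by positivity
    have hb1 : 0 < x₁ ∧ x₁ ≤ 1 := by
      constructor
      · positivity
      · rw [hx1, div_le_one hp1]; simp
    have hb2 : 0 < x₂ ∧ x₂ ≤ 1 := by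
      constructor
      · positivity
      · rw [hx2, div_le_one hp2]; simp
    have hπ := Real.pi_gt_three
    have hn0 : n = 0 := by
      by_contra hne
      have h1n : (1:ℝ) ≤ |(n:ℝ)| := by
        have := Int.one_le_abs hne
        calc (1:ℝ) ≤ (|n| : ℤ) := by exact_mod_cast this
        _ = |(n:ℝ)| := by push_cast; ring
      rcases abs_cases (n:ℝ) with ⟨he, _⟩ | ⟨he, _⟩ <;> nlinarith [hb1.1, hb1.2, hb2.1, hb2.2]
    rw [hn0] at h3
    simp at h3
    rw [hx1, hx2] at h3
    field_simp at h3
    have h3' : (n1:ℝ) = n2 := by linarith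
    exact_mod_cast h3'
  case hf =>
    intro n
    exact h _

theorem phase_coefficients_integral_and_bounded
    (k : ℕ) (hk : 1 ≤ k)
    (T₁ T₂ : Finset (Fin k → ℤ)) (a b : (Fin k → ℤ) → ℂ)
    (F G : (Fin k → ℝ) → ℂ)
    (hF : ∀ θ : Fin k → ℝ,
      F θ = ∑ t ∈ T₁, a t * ∏ j : Fin k, Complex.exp (-Complex.I * (t j : ℂ) * (θ j : ℂ) / 2))
    (hG : ∀ θ : Fin k → ℝ,
      G θ = ∑ t ∈ T₂, b t * ∏ j : Fin k, Complex.exp (-Complex.I * (t j : ℂ) * (θ j : ℂ) / 2))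
    (lam : Fin k → ℕ)
    (hbound : ∀ t ∈ T₁ ∪ T₂, ∀ j : Fin k, |t j| ≤ (lam j : ℤ))
    (hne : ∃ θ : Fin k → ℝ, F θ ≠ 0)
    (α : Fin k → ℝ) (β : ℝ)
    (hphase : ∀ θ : Fin k → ℝ,
      G θ = Complex.exp (-Complex.I * (((∑ j : Fin k, α j * θ j) + β : ℝ) : ℂ) / 2) * F θ) :
    ∀ j : Fin k, (∃ m : ℤ, α j = m) ∧ |α j| ≤ 2 * (lam j : ℝ) := by
  intro j
  obtain ⟨θ₀, hθ₀⟩ := hne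
  have hzne : ∀ x : ℝ, Complex.exp (-Complex.I * x / 2) ≠ 0 := fun x => Complex.exp_ne_zero _
  have hθj : Function.update θ₀ j (θ₀ j) = θ₀ := Function.update_eq_self _ _
  have hprod : ∀ (t : Fin k → ℤ) (x : ℝ),
      (∏ l, Complex.exp (-Complex.I * (t l : ℂ) * ((Function.update θ₀ j x l : ℝ) : ℂ) / 2))
        = Complex.exp (-Complex.I * x / 2) ^ (t j)
          * ∏ l ∈ Finset.univ.erase j, Complex.exp (-Complex.I * (t l : ℂ) * ((θ₀ l : ℝ) : ℂ) / 2) := by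
    intro t x
    rw [← Finset.mul_prod_erase _ _ (Finset.mem_univ j)]
    congr 1
    · rw [Function.update_self, ← Complex.exp_int_mul]
      congr 1
      ring
    · exact Finset.prod_congr rfl fun l hl => by
        rw [Function.update_of_ne (Finset.ne_of_mem_erase hl)]
  have hαsum : ∀ x : ℝ, (∑ l, α l * Function.update θ₀ j x l)
      = α j * x + ∑ l ∈ Finset.univ.erase j, α l * θ₀ l := by
    intro x
    rw [← Finset.add_sum_erase _ _ (Finset.mem_univ j), Function.update_self]
    congr 1
    exact Finset.sum_congr rfl fun l hl => by
      rw [Function.update_of_ne (Finset.ne_of_mem_erase hl)]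
  set S : ℝ := ∑ l ∈ Finset.univ.erase j, α l * θ₀ l with hS
  set P : (Fin k → ℤ) → ℂ :=
    fun t => ∏ l ∈ Finset.univ.erase j, Complex.exp (-Complex.I * (t l : ℂ) * ((θ₀ l : ℝ) : ℂ) / 2)
    with hP
  have hFx : ∀ x : ℝ, F (Function.update θ₀ j x)
      = ∑ t ∈ T₁, a t * (Complex.exp (-Complex.I * x / 2) ^ (t j) * P t) := by
    intro x
    rw [hF]
    exact Finset.sum_congr rfl fun t ht => by rw [hprod]
  have hGx : ∀ x : ℝ, G (Function.update θ₀ j x)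
      = ∑ t ∈ T₂, b t * (Complex.exp (-Complex.I * x / 2) ^ (t j) * P t) := by
    intro x
    rw [hG]
    exact Finset.sum_congr rfl fun t ht => by rw [hprod]
  -- the base exponential is 4π-periodic
  have hzper : ∀ y : ℝ, Complex.exp (-Complex.I * ((y + 4*π : ℝ) : ℂ) / 2)
      = Complex.exp (-Complex.I * (y : ℂ) / 2) := by
    intro y
    rw [show -Complex.I * ((y + 4*π : ℝ) : ℂ) / 2
        = -Complex.I * (y:ℂ) / 2 + ((-1 : ℤ) : ℂ) * (2*π*Complex.I) by push_cast; ring,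
      Complex.exp_add, Complex.exp_int_mul_two_pi_mul_I, mul_one]
  -- Step 1 : integrality
  have hSsum : (∑ l, α l * θ₀ l) = α j * θ₀ j + S := by
    have := hαsum (θ₀ j)
    rwa [hθj] at this
  obtain ⟨m, hm⟩ : ∃ m : ℤ, α j = m := by
    have hF4 : F (Function.update θ₀ j (θ₀ j + 4*π)) = F θ₀ := by
      rw [hFx, hzper, ← hFx, hθj]
    have hG4 : G (Function.update θ₀ j (θ₀ j + 4*π)) = G θ₀ := by
      rw [hGx, hzper, ← hGx, hθj]
    have h1 := hphase (Function.update θ₀ j (θ₀ j + 4*π))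
    rw [hG4, hF4, hαsum, hphase θ₀, hSsum] at h1
    have he := mul_right_cancel₀ hθ₀ h1
    rw [Complex.exp_eq_exp_iff_exists_int] at he
    obtain ⟨n, hn⟩ := he
    set c₁ : ℝ := α j * θ₀ j + S + β with hc₁
    set c₂ : ℝ := α j * (θ₀ j + 4*π) + S + β with hc₂
    have h2 : (c₁ : ℂ) = (c₂ : ℂ) - 4 * π * n := by
      linear_combination (2 * Complex.I) * hn + ((c₁:ℂ) - (c₂:ℂ) + 4 * π * n) * Complex.I_sq
    have h3 : c₁ = c₂ - 4 * π * n := by exact_mod_cast h2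
    refine ⟨n, ?_⟩
    have hπ : (0:ℝ) < π := Real.pi_pos
    rw [hc₁, hc₂] at h3
    have h4 : 4 * π * (α j - n) = 0 := by linarith
    rcases mul_eq_zero.mp h4 with h5 | h5
    · exact absurd h5 (by positivity)
    · linarith
  -- Step 2 : bound
  set N : ℕ := lam j with hN
  set p : Polynomial ℂ :=
    ∑ t ∈ T₁, Polynomial.C (a t * P t) * Polynomial.X ^ (t j + N).toNat with hp
  set q : Polynomial ℂ :=
    ∑ t ∈ T₂, Polynomial.C (b t * P t) * Polynomial.X ^ (t j + N).toNat with hq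
  have hb1 : ∀ t ∈ T₁, -(N:ℤ) ≤ t j ∧ t j ≤ N := by
    intro t ht
    have := abs_le.mp (hbound t (Finset.mem_union_left _ ht) j)
    exact ⟨this.1, this.2⟩
  have hb2 : ∀ t ∈ T₂, -(N:ℤ) ≤ t j ∧ t j ≤ N := by
    intro t ht
    have := abs_le.mp (hbound t (Finset.mem_union_right _ ht) j)
    exact ⟨this.1, this.2⟩
  have hpeval : ∀ x : ℝ, p.eval (Complex.exp (-Complex.I * x / 2))
      = Complex.exp (-Complex.I * x / 2) ^ (N:ℤ) * F (Function.update θ₀ j x) := by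
    intro x
    rw [hFx, hp]
    rw [Polynomial.eval_finset_sum, Finset.mul_sum]
    refine Finset.sum_congr rfl fun t ht => ?_
    rw [Polynomial.eval_mul, Polynomial.eval_C, Polynomial.eval_pow, Polynomial.eval_X,
      ← zpow_natCast, Int.toNat_of_nonneg (by linarith [(hb1 t ht).1]),
      zpow_add₀ (hzne x)]
    ring
  have hqeval : ∀ x : ℝ, q.eval (Complex.exp (-Complex.I * x / 2))
      = Complex.exp (-Complex.I * x / 2) ^ (N:ℤ) * G (Function.update θ₀ j x) := by
    intro x
    rw [hGx, hq]
    rw [Polynomial.eval_finset_sum, Finset.mul_sum]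
    refine Finset.sum_congr rfl fun t ht => ?_
    rw [Polynomial.eval_mul, Polynomial.eval_C, Polynomial.eval_pow, Polynomial.eval_X,
      ← zpow_natCast, Int.toNat_of_nonneg (by linarith [(hb2 t ht).1]),
      zpow_add₀ (hzne x)]
    ring
  set K : ℂ := Complex.exp (-Complex.I * ((S + β : ℝ) : ℂ) / 2) with hK
  have hKne : K ≠ 0 := Complex.exp_ne_zero _
  have hGF : ∀ x : ℝ, G (Function.update θ₀ j x)
      = K * Complex.exp (-Complex.I * x / 2) ^ m * F (Function.update θ₀ j x) := by
    intro x
    rw [hphase, hαsum, hm]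
    congr 1
    rw [hK, ← Complex.exp_int_mul, ← Complex.exp_add]
    congr 1
    push_cast
    ring
  set a' : ℕ := (-m).toNat with ha'
  set b' : ℕ := m.toNat with hb'
  set r : Polynomial ℂ := Polynomial.X ^ a' * q - Polynomial.C K * (Polynomial.X ^ b' * p)
    with hr
  have hreq : Polynomial.X ^ a' * q = Polynomial.C K * (Polynomial.X ^ b' * p) := by
    have hr0 : r = 0 := by
      apply aux_inf_root
      intro x
      set z : ℂ := Complex.exp (-Complex.I * x / 2) with hz
      have hzx : z ≠ 0 := hzne x
      have hzb : z ^ (b' : ℤ) = z ^ (a' : ℤ) * z ^ m := by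
        rw [← zpow_add₀ hzx]
        congr 1
        omega
      rw [hr, Polynomial.eval_sub, Polynomial.eval_mul, Polynomial.eval_mul,
        Polynomial.eval_mul, Polynomial.eval_pow, Polynomial.eval_pow,
        Polynomial.eval_X, Polynomial.eval_C, hpeval, hqeval, hGF,
        ← zpow_natCast z a', ← zpow_natCast z b', hzb]
      ring
    rw [hr] at hr0
    exact sub_eq_zero.mp hr0
  have hpne : p ≠ 0 := by
    intro h0
    have hev := hpeval (θ₀ j)
    rw [h0, Polynomial.eval_zero, hθj] at hev
    exact (mul_ne_zero (zpow_ne_zero _ (hzne (θ₀ j))) hθ₀) hev.symm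
  have hqne : q ≠ 0 := by
    intro h0
    rw [h0, mul_zero] at hreq
    exact (mul_ne_zero (Polynomial.C_ne_zero.mpr hKne)
      (mul_ne_zero (pow_ne_zero _ Polynomial.X_ne_zero) hpne)) hreq.symm
  have hdeg : a' + q.natDegree = b' + p.natDegree := by
    have h1 := congrArg Polynomial.natDegree hreq
    rw [Polynomial.natDegree_mul (pow_ne_zero _ Polynomial.X_ne_zero) hqne,
      Polynomial.natDegree_mul (Polynomial.C_ne_zero.mpr hKne)
        (mul_ne_zero (pow_ne_zero _ Polynomial.X_ne_zero) hpne),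
      Polynomial.natDegree_mul (pow_ne_zero _ Polynomial.X_ne_zero) hpne,
      Polynomial.natDegree_C, Polynomial.natDegree_X_pow] at h1
    simpa using h1
  have hdp : p.natDegree ≤ 2 * N := by
    rw [hp]
    apply Polynomial.natDegree_sum_le_of_forall_le
    intro t ht
    refine Polynomial.natDegree_mul_le.trans ?_
    simp only [Polynomial.natDegree_C, Polynomial.natDegree_X_pow, zero_add]
    have := hb1 t ht
    omega
  have hdq : q.natDegree ≤ 2 * N := by
    rw [hq]
    apply Polynomial.natDegree_sum_le_of_forall_le
    intro t ht
    refine Polynomial.natDegree_mul_le.trans ?_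
    simp only [Polynomial.natDegree_C, Polynomial.natDegree_X_pow, zero_add]
    have := hb2 t ht
    omega
  constructor
  · exact ⟨m, hm⟩
  · rw [hm]
    have hmb : |m| ≤ 2 * (N:ℤ) := abs_le.mpr (by omega)
    calc |(m:ℝ)| = ((|m| : ℤ) : ℝ) := by push_cast; ring
    _ ≤ ((2 * N : ℤ) : ℝ) := by exact_mod_cast hmb
    _ = 2 * (N:ℝ) := by push_cast; ring
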